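/- Let a₀, a₁, … be positive reals with partial sums A_i = Σ_{j=0}^i a_j, and suppose a₀ = 1 and a_k² = A_k for all k ≥ 1. Then A_k ≥ (k+1)(k+2)/4 for all k ≥ 0. -/
import Mathlib

open Finset

/-- **Growth of the weight sequence, smooth convex case (`μ = 0`).**
If `a 0 = 1` and `a k ^ 2 = A k` for all `k ≥ 1`, where `A` is the sequence of partial
sums of the positive sequence `a`, then `A k ≥ (k+1)(k+2)/4` for all `k`. -/
theorem weight_growth_convex (a A : ℕ → ℝ) (ha : ∀ i, 0 < a i)
    (hA : ∀ i, A i = ∑ j ∈ Finset.range (i + 1), a j)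
    (ha0 : a 0 = 1) (hak : ∀ k, 1 ≤ k → a k ^ 2 = A k) :
    ∀ k, A k ≥ ((k : ℝ) + 1) * ((k : ℝ) + 2) / 4 := by
  intro k
  induction k with
  | zero => simp [hA 0, ha0]; norm_num
  | succ n ih =>
    have hstep : A (n + 1) = A n + a (n + 1) := by
      rw [hA (n + 1), hA n, Finset.sum_range_succ]
    have hsq : a (n + 1) ^ 2 = A n + a (n + 1) := by
      rw [← hstep]; exact hak (n + 1) (Nat.le_add_left 1 n)
    have hpos := ha (n + 1)
    have hlb : a (n + 1) ≥ ((n : ℝ) + 2) / 2 := by nlinarith [ih, hsq, hpos, mul_pos hpos (show (0:ℝ) < a (n+1) + ((n:ℝ)+1)/2 by positivity)]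
    push_cast
    nlinarith [ih, hlb, hstep]
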